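/- The q_R-conformal symmetries form an asymptotic representation of the Witt algebra modulo O(ℏ) near the extremal weights 1/2 and 1, in the following instance: there exists a constant C > 0 such that for every real ℏ with 0 < ℏ < 1/4 and every integer n ≥ 2, |λ_n(1/2 + ℏ) − (4n + 2 + 4ℏ)| ≤ C·ℏ and |λ_n(1 + ℏ) − (4n + 4 + 4ℏ)| ≤ C·ℏ; here 4n + 4h is the eigenvalue of 4·L₀ on zⁿ in V_h, so the defect [L₂, L₋₂] − 4·L₀ is uniformly O(ℏ) on the monomial basis for h = 1/2 + ℏ and for h = 1 + ℏ. -/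
import Mathlib
set_option maxHeartbeats 2000000


noncomputable section

/-- The eigenvalue `λₙ(h)` of the commutator `[L₂, L₋₂]` on the monomial `zⁿ` in the Verma
module `V_h`:
`λₙ(h) = (n+3h)²(n+1)(n+2)/((n+2h)(n+2h+1)) − (n+3h−2)²·n·(n−1)/((n+2h−1)(n+2h−2))`. -/
def lam (h : ℝ) (n : ℕ) : ℝ :=
  ((n : ℝ) + 3 * h) ^ 2 * ((n : ℝ) + 1) * ((n : ℝ) + 2) /
      (((n : ℝ) + 2 * h) * ((n : ℝ) + 2 * h + 1)) -
    ((n : ℝ) + 3 * h - 2) ^ 2 * (n : ℝ) * ((n : ℝ) - 1) /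
      (((n : ℝ) + 2 * h - 1) * ((n : ℝ) + 2 * h - 2))

lemma abs_mul_div_le (e Q D C : ℝ) (he : 0 < e) (hD : 0 < D) (h : |Q| ≤ C * D) :
    |e * Q / D| ≤ C * e := by
  rw [abs_div, abs_mul, abs_of_pos he, abs_of_pos hD, div_le_iff₀ hD]
  have h0 : 0 ≤ |Q| := abs_nonneg Q
  nlinarith

/-- asymptotic representation of the Witt algebra mod O(ℏ) near `h = 1/2` and
`h = 1`: there is `C > 0` such that for all `0 < ℏ < 1/4` and all `n ≥ 2`,
`|λₙ(1/2+ℏ) − (4n+2+4ℏ)| ≤ C·ℏ` and `|λₙ(1+ℏ) − (4n+4+4ℏ)| ≤ C·ℏ`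
(here `4n+4h` is the eigenvalue of `4L₀` on `zⁿ`). -/
theorem stmt_17 :
    ∃ C : ℝ, 0 < C ∧
      ∀ ℏ : ℝ, 0 < ℏ → ℏ < 1 / 4 → ∀ n : ℕ, 2 ≤ n →
        |lam (1 / 2 + ℏ) n - (4 * (n : ℝ) + 2 + 4 * ℏ)| ≤ C * ℏ ∧
        |lam (1 + ℏ) n - (4 * (n : ℝ) + 4 + 4 * ℏ)| ≤ C * ℏ := by
  refine ⟨1000, by norm_num, fun ℏ he he4 n hn => ?_⟩
  have hx : (2:ℝ) ≤ (n:ℝ) := by exact_mod_cast hn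
  set x := (n:ℝ) with hxdef
  constructor
  · -- h = 1/2 + ℏ
    have d1 : (0:ℝ) < x + 1 + 2*ℏ := by linarith
    have d2 : (0:ℝ) < x + 2 + 2*ℏ := by linarith
    have d3 : (0:ℝ) < x + 2*ℏ := by linarith
    have d4 : (0:ℝ) < x - 1 + 2*ℏ := by linarith
    have hD : (0:ℝ) < ((x+1+2*ℏ)*(x+2+2*ℏ))*((x+2*ℏ)*(x-1+2*ℏ)) := by positivity
    have n1 : x + 2*(1/2+ℏ) ≠ 0 := by nlinarith
    have n2 : x + 2*(1/2+ℏ) + 1 ≠ 0 := by nlinarith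
    have n3 : x + 2*(1/2+ℏ) - 1 ≠ 0 := by nlinarith
    have n4 : x + 2*(1/2+ℏ) - 2 ≠ 0 := by nlinarith
    have e1 := d1.ne'
    have e2 := d2.ne'
    have e3 := d3.ne'
    have e4 := d4.ne'
    have key : (lam (1/2+ℏ) n - (4*x+2+4*ℏ))
          * (((x+1+2*ℏ)*(x+2+2*ℏ))*((x+2*ℏ)*(x-1+2*ℏ)))
        = ℏ * (2*x^2 + 2*x - 1 + ℏ*(12*x+6) + ℏ^2*(-8*x^2-8*x+20)
            + ℏ^3*(-48*x-24) - 64*ℏ^4) := by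
      have hlam : lam (1/2+ℏ) n
          = (x+3/2+3*ℏ)^2*(x+1)*(x+2)/((x+1+2*ℏ)*(x+2+2*ℏ))
            - (x-1/2+3*ℏ)^2*x*(x-1)/((x+2*ℏ)*(x-1+2*ℏ)) := by
        unfold lam
        rw [← hxdef]
        ring_nf
      rw [hlam]
      field_simp
      ring
    have heq : lam (1/2+ℏ) n - (4*x+2+4*ℏ)
        = ℏ * (2*x^2 + 2*x - 1 + ℏ*(12*x+6) + ℏ^2*(-8*x^2-8*x+20)
            + ℏ^3*(-48*x-24) - 64*ℏ^4)
          / (((x+1+2*ℏ)*(x+2+2*ℏ))*((x+2*ℏ)*(x-1+2*ℏ))) := by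
      rw [eq_div_iff hD.ne']
      exact key
    rw [heq]
    apply abs_mul_div_le _ _ _ _ he hD
    rw [abs_le]
    constructor
    · nlinarith [sq_nonneg ℏ, sq_nonneg (ℏ*x), sq_nonneg x, mul_pos d1 d2, mul_pos d3 d4,
        mul_nonneg (mul_nonneg he.le he.le) (sub_nonneg.2 hx),
        mul_nonneg he.le (sub_nonneg.2 hx), sq_nonneg (x-2)]
    · nlinarith [sq_nonneg ℏ, sq_nonneg (ℏ*x), sq_nonneg x, mul_pos d1 d2, mul_pos d3 d4,
        mul_nonneg (mul_nonneg he.le he.le) (sub_nonneg.2 hx),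
        mul_nonneg he.le (sub_nonneg.2 hx), sq_nonneg (x-2)]
  · -- h = 1 + ℏ
    have d1 : (0:ℝ) < x + 2 + 2*ℏ := by linarith
    have d2 : (0:ℝ) < x + 3 + 2*ℏ := by linarith
    have d3 : (0:ℝ) < x + 1 + 2*ℏ := by linarith
    have d4 : (0:ℝ) < x + 2*ℏ := by linarith
    have hD : (0:ℝ) < ((x+2+2*ℏ)*(x+3+2*ℏ))*((x+1+2*ℏ)*(x+2*ℏ)) := by positivity
    have n1 : x + 2*(1+ℏ) ≠ 0 := by nlinarith
    have n2 : x + 2*(1+ℏ) + 1 ≠ 0 := by nlinarith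
    have n3 : x + 2*(1+ℏ) - 1 ≠ 0 := by nlinarith
    have n4 : x + 2*(1+ℏ) - 2 ≠ 0 := by nlinarith
    have e1 := d1.ne'
    have e2 := d2.ne'
    have e3 := d3.ne'
    have e4 := d4.ne'
    have key : (lam (1+ℏ) n - (4*x+4+4*ℏ))
          * (((x+2+2*ℏ)*(x+3+2*ℏ))*((x+1+2*ℏ)*(x+2*ℏ)))
        = ℏ * (-(4*x^2+16*x+12) - ℏ*(12*x^2+72*x+80) - ℏ^2*(8*x^2+104*x+188)
            - ℏ^3*(48*x+184) - 64*ℏ^4) := by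
      have hlam : lam (1+ℏ) n
          = (x+3+3*ℏ)^2*(x+1)*(x+2)/((x+2+2*ℏ)*(x+3+2*ℏ))
            - (x+1+3*ℏ)^2*x*(x-1)/((x+1+2*ℏ)*(x+2*ℏ)) := by
        unfold lam
        rw [← hxdef]
        ring_nf
      rw [hlam]
      field_simp
      ring
    have heq : lam (1+ℏ) n - (4*x+4+4*ℏ)
        = ℏ * (-(4*x^2+16*x+12) - ℏ*(12*x^2+72*x+80) - ℏ^2*(8*x^2+104*x+188)
            - ℏ^3*(48*x+184) - 64*ℏ^4)
          / (((x+2+2*ℏ)*(x+3+2*ℏ))*((x+1+2*ℏ)*(x+2*ℏ))) := by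
      rw [eq_div_iff hD.ne']
      exact key
    rw [heq]
    apply abs_mul_div_le _ _ _ _ he hD
    rw [abs_le]
    constructor
    · nlinarith [sq_nonneg ℏ, sq_nonneg (ℏ*x), sq_nonneg x, mul_pos d1 d2, mul_pos d3 d4,
        mul_nonneg (mul_nonneg he.le he.le) (sub_nonneg.2 hx),
        mul_nonneg he.le (sub_nonneg.2 hx), sq_nonneg (x-2)]
    · nlinarith [sq_nonneg ℏ, sq_nonneg (ℏ*x), sq_nonneg x, mul_pos d1 d2, mul_pos d3 d4,
        mul_nonneg (mul_nonneg he.le he.le) (sub_nonneg.2 hx),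
        mul_nonneg he.le (sub_nonneg.2 hx), sq_nonneg (x-2)]

end
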